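/- arXiv:2105.06144 — 2 statements merged into one kernel-verified Lean document; each statement's English description precedes it below -/
import Mathlib

section
/- Fix an (m−2k)-subset S of [m] with m > 2k. The set E_S of edges {A, A ∪ S} of H(m,k), where A ranges over all k-subsets of [m] \ S, is a pairwise 3-disjoint set of edges of H(m,k) of cardinality C(2k,k). -/
open Finset

/-- Vertex type of the bipartite Kneser graph: `k`-subsets of `[m]` on the left,
`(m-k)`-subsets on the right. -/
abbrev KVert (m k : ℕ) :=
  {A : Finset (Fin m) // A.card = k} ⊕ {B : Finset (Fin m) // B.card = m - k}

def bkAdj (m k : ℕ) : KVert m k → KVert m k → Prop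
  | Sum.inl A, Sum.inr B => A.1 ⊆ B.1
  | Sum.inr B, Sum.inl A => A.1 ⊆ B.1
  | _, _ => False

/-- The bipartite Kneser graph `H(m,k)`. -/
def HBK (m k : ℕ) : SimpleGraph (KVert m k) where
  Adj := bkAdj m k
  symm := by
    refine ⟨fun u v h => ?_⟩
    cases u <;> cases v <;> simp_all [bkAdj]
  loopless := by
    refine ⟨fun u => ?_⟩
    cases u <;> simp [bkAdj]

instance (m k : ℕ) : DecidableRel (HBK m k).Adj := fun a b =>
  match a, b with
  | Sum.inl A, Sum.inr B => inferInstanceAs (Decidable (A.1 ⊆ B.1))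
  | Sum.inr B, Sum.inl A => inferInstanceAs (Decidable (A.1 ⊆ B.1))
  | Sum.inl _, Sum.inl _ => inferInstanceAs (Decidable False)
  | Sum.inr _, Sum.inr _ => inferInstanceAs (Decidable False)

/-- For a fixed `(m-2k)`-subset `S` of `[m]` (with `m > 2k`), the edges `{A, A ∪ S}`,
for `A` a `k`-subset of `[m] \ S`, form a pairwise 3-disjoint set of edges of `H(m,k)`
of cardinality `C(2k,k)`. -/
theorem ES_pairwise_threeDisjoint (m k : ℕ) (hk : 1 ≤ k) (hm : 2 * k < m)
    (S : Finset (Fin m)) (hS : S.card = m - 2 * k) :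
    (∀ A : Finset (Fin m), A ⊆ Sᶜ → A.card = k →
        A ⊆ A ∪ S ∧ (A ∪ S).card = m - k) ∧
    (∀ A A' : Finset (Fin m), A ⊆ Sᶜ → A' ⊆ Sᶜ → A.card = k → A'.card = k → A ≠ A' →
        A ∪ S ≠ A' ∪ S ∧ ¬ A ⊆ A' ∪ S ∧ ¬ A' ⊆ A ∪ S) ∧
    (Sᶜ.powersetCard k).card = (2 * k).choose k := by
  have hdisj : ∀ A : Finset (Fin m), A ⊆ Sᶜ → Disjoint A S := by
    intro A hA
    exact disjoint_compl_left.mono_left hA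
  have hsub : ∀ A A' : Finset (Fin m), A ⊆ Sᶜ → A.card = k → A'.card = k →
      A ⊆ A' ∪ S → A = A' := by
    intro A A' hA hcA hcA' hss
    have : A ⊆ A' := by
      intro a ha
      rcases mem_union.1 (hss ha) with h | h
      · exact h
      · exact absurd h (by simpa using hA ha)
    exact eq_of_subset_of_card_le this (by omega)
  refine ⟨?_, ?_, ?_⟩
  · intro A hA hcA
    refine ⟨subset_union_left, ?_⟩
    rw [card_union_of_disjoint (hdisj A hA), hcA, hS]
    omega
  · intro A A' hA hA' hcA hcA' hne
    refine ⟨?_, fun h => hne (hsub A A' hA hcA hcA' h),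
      fun h => hne.symm (hsub A' A hA' hcA' hcA h)⟩
    intro h
    exact hne (hsub A A' hA hcA hcA' (h ▸ subset_union_left))
  · rw [card_powersetCard, card_compl, Fintype.card_fin, hS]
    congr 1
    omega
end

section
/- Let m > 2k, fix an (m−2k)-subset S of [m] and j ∈ [m]\S, and set T = S ∪ {j} (so |T| = m−2k+1). Let W be the union of: all k-subsets A of [m] with A ∩ T = ∅, and all (m−k)-subsets B of [m] with T ⊆ B. Then W is a dominating set of the bipartite Kneser graph H(m,k). -/
open Finset

/-- Membership in the set `W`: left vertices (k-subsets) disjoint from `T`, right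
vertices ((m-k)-subsets) containing `T`. -/
def inW (m k : ℕ) (T : Finset (Fin m)) : KVert m k → Prop :=
  Sum.elim (fun A => Disjoint A.1 T) (fun B => T ⊆ B.1)

instance (m k : ℕ) (T : Finset (Fin m)) : DecidablePred (inW m k T) := fun v =>
  match v with
  | Sum.inl A => inferInstanceAs (Decidable (Disjoint A.1 T))
  | Sum.inr B => inferInstanceAs (Decidable (T ⊆ B.1))


/-- For `m > 2k`, an `(m-2k)`-subset `S` of `[m]` and `j ∉ S`, set `T = S ∪ {j}`. The
set `W` of all `k`-subsets disjoint from `T` together with all `(m-k)`-subsets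
containing `T` is a dominating set of `H(m,k)`. -/
theorem W_dominating (m k : ℕ) (hk : 1 ≤ k) (hm : 2 * k < m)
    (S : Finset (Fin m)) (hS : S.card = m - 2 * k) (j : Fin m) (hj : j ∉ S) :
    ∀ v : KVert m k, ¬ inW m k (insert j S) v →
      ∃ w : KVert m k, inW m k (insert j S) w ∧ (HBK m k).Adj v w := by
  intro v hv
  set T := insert j S with hT
  have hTcard : T.card = m - 2 * k + 1 := by
    rw [hT, Finset.card_insert_of_notMem hj, hS]
  cases v with
  | inl A =>
    -- A is a k-set intersecting T; extend A ∪ T to an (m-k)-set B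
    simp only [inW, Sum.elim_inl] at hv
    have hinter : 1 ≤ (A.1 ∩ T).card := by
      rw [Nat.one_le_iff_ne_zero, Ne, Finset.card_eq_zero]
      intro h
      exact hv (Finset.disjoint_iff_inter_eq_empty.mpr h)
    have hsum : (A.1 ∪ T).card + (A.1 ∩ T).card = k + (m - 2 * k + 1) := by
      rw [Finset.card_union_add_card_inter, A.2, hTcard]
    have hcard : (A.1 ∪ T).card ≤ m - k := by omega
    obtain ⟨B, hB1, hB2⟩ := Finset.exists_superset_card_eq hcard
      (by simp : m - k ≤ (Finset.univ : Finset (Fin m)).card)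
    exact ⟨Sum.inr ⟨B, hB2⟩, fun y hy => hB1 (Finset.mem_union_right _ hy),
      fun y hy => hB1 (Finset.mem_union_left _ hy)⟩
  | inr B =>
    simp only [inW, Sum.elim_inr] at hv
    have hx : ∃ x ∈ T, x ∉ B.1 := by
      by_contra h
      push_neg at h
      exact hv h
    obtain ⟨x, hxT, hxB⟩ := hx
    have hinter : (B.1 ∩ T).card + 1 ≤ T.card := by
      have hsub : B.1 ∩ T ⊆ T.erase x := fun y hy => by
        rw [Finset.mem_erase]
        exact ⟨fun hyx => hxB (hyx ▸ (Finset.mem_inter.mp hy).1), (Finset.mem_inter.mp hy).2⟩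
      calc (B.1 ∩ T).card + 1 ≤ (T.erase x).card + 1 := by
            exact Nat.add_le_add_right (Finset.card_le_card hsub) 1
        _ = T.card := Finset.card_erase_add_one hxT
    have hsd : (B.1 \ T).card = B.1.card - (B.1 ∩ T).card := Finset.card_sdiff_add_card_inter B.1 T ▸ by omega
    have hkle : k ≤ (B.1 \ T).card := by
      have := B.2
      omega
    obtain ⟨A, hA1, hA2⟩ := Finset.exists_subset_card_eq hkle
    refine ⟨Sum.inl ⟨A, hA2⟩, ?_, ?_⟩
    · exact Finset.disjoint_left.mpr fun y hy hyT =>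
        (Finset.mem_sdiff.mp (hA1 hy)).2 hyT
    · exact fun y hy => (Finset.mem_sdiff.mp (hA1 hy)).1
end
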